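/- Let f₀, f₁, f₂, f₃ : ℝ² → ℂ be smooth functions that are ℤ²-periodic (f(x+1,y) = f(x,y) = f(x,y+1)), and define φ(f₀, f₁, f₂) = ∫_{[0,1]²} f₀·(∂₁f₁·∂₂f₂ − ∂₂f₁·∂₁f₂), where ∂₁, ∂₂ denote the partial derivatives. Then φ is a cyclic 2-cocycle on the algebra of smooth ℤ²-periodic ℂ-valued functions: (i) φ(f₀f₁, f₂, f₃) − φ(f₀, f₁f₂, f₃) + φ(f₀, f₁, f₂f₃) − φ(f₃f₀, f₁, f₂) = 0 (the Hochschild cocycle condition bφ = 0), and (ii) φ(f₂, f₀, f₁) = φ(f₀, f₁, f₂) (the cyclicity condition λφ = φ). -/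

import Mathlib

noncomputable section
open MeasureTheory intervalIntegral

/-- First partial derivative of a function of two real variables. -/
def pd1 (f : ℝ → ℝ → ℂ) : ℝ → ℝ → ℂ := fun x y => deriv (fun t => f t y) x

/-- Second partial derivative of a function of two real variables. -/
def pd2 (f : ℝ → ℝ → ℂ) : ℝ → ℝ → ℂ := fun x y => deriv (fun t => f x t) y

/-- The fundamental cyclic 2-cocycle of the 2-torus,
`φ(f₀,f₁,f₂) = ∫_{[0,1]²} f₀ (∂₁f₁ ∂₂f₂ − ∂₂f₁ ∂₁f₂)`, on the algebra of smooth
`ℤ²`-periodic functions on `ℝ²`. -/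
def torPhi (f g h : ℝ → ℝ → ℂ) : ℂ :=
  ∫ x in (0:ℝ)..1, ∫ y in (0:ℝ)..1,
    f x y * (pd1 g x y * pd2 h x y - pd2 g x y * pd1 h x y)

variable {f g : ℝ → ℝ → ℂ}

private def Sm (f : ℝ → ℝ → ℂ) : Prop := ContDiff ℝ (⊤ : ℕ∞) (fun p : ℝ × ℝ => f p.1 p.2)

lemma hd1 (hf : Sm f) (x y : ℝ) :
    HasDerivAt (fun t => f t y) (fderiv ℝ (fun p : ℝ × ℝ => f p.1 p.2) (x, y) (1, 0)) x :=
  by have := ((hf.differentiable (by simp) (x, y)).hasFDerivAt).comp_hasDerivAt x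
       ((hasDerivAt_id' x).prodMk (hasDerivAt_const x y)); exact this

lemma hd2 (hf : Sm f) (x y : ℝ) :
    HasDerivAt (fun t => f x t) (fderiv ℝ (fun p : ℝ × ℝ => f p.1 p.2) (x, y) (0, 1)) y :=
  ((hf.differentiable (by simp) (x, y)).hasFDerivAt).comp_hasDerivAt y
    ((hasDerivAt_const y x).prodMk (hasDerivAt_id y))

lemma pd1_eq (hf : Sm f) (x y : ℝ) :
    pd1 f x y = fderiv ℝ (fun p : ℝ × ℝ => f p.1 p.2) (x, y) (1, 0) := (hd1 hf x y).deriv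

lemma pd2_eq (hf : Sm f) (x y : ℝ) :
    pd2 f x y = fderiv ℝ (fun p : ℝ × ℝ => f p.1 p.2) (x, y) (0, 1) := (hd2 hf x y).deriv

lemma sm_pd1 (hf : Sm f) : Sm (pd1 f) := by
  have : (fun p : ℝ × ℝ => pd1 f p.1 p.2)
      = fun p : ℝ × ℝ => fderiv ℝ (fun p : ℝ × ℝ => f p.1 p.2) p ((1:ℝ), (0:ℝ)) := by
    funext p; exact pd1_eq hf p.1 p.2
  rw [Sm, this]
  exact (hf.fderiv_right (by simp)).clm_apply contDiff_const

lemma sm_pd2 (hf : Sm f) : Sm (pd2 f) := by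
  have : (fun p : ℝ × ℝ => pd2 f p.1 p.2)
      = fun p : ℝ × ℝ => fderiv ℝ (fun p : ℝ × ℝ => f p.1 p.2) p ((0:ℝ), (1:ℝ)) := by
    funext p; exact pd2_eq hf p.1 p.2
  rw [Sm, this]
  exact (hf.fderiv_right (by simp)).clm_apply contDiff_const

lemma pd1_mul (hf : Sm f) (hg : Sm g) (x y : ℝ) :
    pd1 (f * g) x y = pd1 f x y * g x y + f x y * pd1 g x y := by
  have h := ((hd1 hf x y).mul (hd1 hg x y)).deriv
  rw [← pd1_eq hf, ← pd1_eq hg] at h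
  exact h

lemma pd2_mul (hf : Sm f) (hg : Sm g) (x y : ℝ) :
    pd2 (f * g) x y = pd2 f x y * g x y + f x y * pd2 g x y := by
  have h := ((hd2 hf x y).mul (hd2 hg x y)).deriv
  rw [← pd2_eq hf, ← pd2_eq hg] at h
  exact h

lemma clairaut (hf : Sm f) (x y : ℝ) : pd1 (pd2 f) x y = pd2 (pd1 f) x y := by
  set F : ℝ × ℝ → ℂ := fun p => f p.1 p.2 with hF
  have hdf : Sm f := hf
  have h1 : ∀ v : ℝ × ℝ, ∀ x y : ℝ,
      fderiv ℝ (fun p : ℝ × ℝ => fderiv ℝ F p v) (x, y)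
        = (fderiv ℝ (fderiv ℝ F) (x, y)).flip v := by
    intro v x y
    have hc : HasFDerivAt (fun w : (ℝ × ℝ) →L[ℝ] ℂ => w v)
        (ContinuousLinearMap.apply ℝ ℂ v) (fderiv ℝ F (x, y)) :=
      (ContinuousLinearMap.apply ℝ ℂ v).hasFDerivAt
    have hd : HasFDerivAt (fderiv ℝ F) (fderiv ℝ (fderiv ℝ F) (x, y)) (x, y) :=
      (((hf.fderiv_right (m := (⊤:ℕ∞)) (by simp)).differentiable (by simp)) (x, y)).hasFDerivAt
    have h := (hc.comp (x, y) hd).fderiv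
    have : (fun p : ℝ × ℝ => fderiv ℝ F p v) = (fun w : (ℝ × ℝ) →L[ℝ] ℂ => w v) ∘ fderiv ℝ F := rfl
    rw [this, h]; rfl
  have hD : Differentiable ℝ F := hf.differentiable (by simp)
  have hD2 : Differentiable ℝ (fderiv ℝ F) :=
    (hf.fderiv_right (m := (⊤:ℕ∞)) (by simp)).differentiable (by simp)
  have sym := second_derivative_symmetric (f := F) (f' := fderiv ℝ F)
    (f'' := fderiv ℝ (fderiv ℝ F) (x, y)) (x := (x, y))
    (fun p => (hD p).hasFDerivAt)
    ((hD2 (x, y)).hasFDerivAt)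
    ((1:ℝ), (0:ℝ)) ((0:ℝ), (1:ℝ))
  have e1 : pd1 (pd2 f) x y = fderiv ℝ (fderiv ℝ F) (x, y) (1, 0) (0, 1) := by
    rw [pd1_eq (sm_pd2 hf) x y]
    have : (fun p : ℝ × ℝ => pd2 f p.1 p.2)
        = fun p : ℝ × ℝ => fderiv ℝ F p ((0:ℝ), (1:ℝ)) := by
      funext p; exact pd2_eq hf p.1 p.2
    rw [this, h1]; rfl
  have e2 : pd2 (pd1 f) x y = fderiv ℝ (fderiv ℝ F) (x, y) (0, 1) (1, 0) := by
    rw [pd2_eq (sm_pd1 hf) x y]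
    have : (fun p : ℝ × ℝ => pd1 f p.1 p.2)
        = fun p : ℝ × ℝ => fderiv ℝ F p ((1:ℝ), (0:ℝ)) := by
      funext p; exact pd1_eq hf p.1 p.2
    rw [this, h1]; rfl
  rw [e1, e2, sym]

private def Per (f : ℝ → ℝ → ℂ) : Prop := ∀ x y : ℝ, f (x + 1) y = f x y ∧ f x (y + 1) = f x y

lemma per_mul {f g : ℝ → ℝ → ℂ} (hf : Per f) (hg : Per g) : Per (f * g) := by
  intro x y
  constructor <;> simp [Pi.mul_apply, (hf x y).1, (hf x y).2, (hg x y).1, (hg x y).2]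

lemma per_pd1 {f : ℝ → ℝ → ℂ} (hp : Per f) : Per (pd1 f) := by
  intro x y
  constructor
  · have : (fun t => f t y) = fun t => f (t + 1) y := by
      funext t; exact ((hp t y).1).symm
    calc pd1 f (x + 1) y = deriv (fun t => f t y) (x + 1) := rfl
      _ = deriv (fun t => f (t + 1) y) x := (deriv_comp_add_const _ _ _).symm
      _ = pd1 f x y := by rw [← this]; rfl
  · have : (fun t => f t (y + 1)) = fun t => f t y := by
      funext t; exact (hp t y).2
    show deriv (fun t => f t (y + 1)) x = _
    rw [this]; rfl

lemma per_pd2 {f : ℝ → ℝ → ℂ} (hp : Per f) : Per (pd2 f) := by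
  intro x y
  constructor
  · have : (fun t => f (x + 1) t) = fun t => f x t := by
      funext t; exact (hp x t).1
    show deriv (fun t => f (x + 1) t) y = _
    rw [this]; rfl
  · have : (fun t => f x t) = fun t => f x (t + 1) := by
      funext t; exact ((hp x t).2).symm
    calc pd2 f x (y + 1) = deriv (fun t => f x t) (y + 1) := rfl
      _ = deriv (fun t => f x (t + 1)) y := (deriv_comp_add_const _ _ _).symm
      _ = pd2 f x y := by rw [← this]; rfl

private def PC (f : ℝ → ℝ → ℂ) : Prop := Continuous fun p : ℝ × ℝ => f p.1 p.2

lemma sm_pc {f : ℝ → ℝ → ℂ} (hf : Sm f) : PC f := hf.continuous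

lemma pc_slice1 {f : ℝ → ℝ → ℂ} (hf : PC f) (y : ℝ) : Continuous fun x => f x y :=
  hf.comp (continuous_id.prodMk continuous_const)

lemma pc_slice2 {f : ℝ → ℝ → ℂ} (hf : PC f) (x : ℝ) : Continuous fun y => f x y :=
  hf.comp (continuous_const.prodMk continuous_id)

/-- FTC on a period: the integral of the first partial over one x-period vanishes. -/
lemma integral_pd1_zero {f : ℝ → ℝ → ℂ} (hf : Sm f) (hp : Per f) (y : ℝ) :
    ∫ x in (0:ℝ)..1, pd1 f x y = 0 := by
  have h : ∫ x in (0:ℝ)..1, pd1 f x y = f 1 y - f 0 y := by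
    apply intervalIntegral.integral_deriv_eq_sub
    · intro t _; exact (hd1 hf t y).differentiableAt
    · exact (pc_slice1 (sm_pc (sm_pd1 hf)) y).intervalIntegrable 0 1
  rw [h]
  have : f 1 y = f 0 y := by simpa using (hp 0 y).1
  rw [this, sub_self]

lemma integral_pd2_zero {f : ℝ → ℝ → ℂ} (hf : Sm f) (hp : Per f) (x : ℝ) :
    ∫ y in (0:ℝ)..1, pd2 f x y = 0 := by
  have h : ∫ y in (0:ℝ)..1, pd2 f x y = f x 1 - f x 0 := by
    apply intervalIntegral.integral_deriv_eq_sub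
    · intro t _; exact (hd2 hf x t).differentiableAt
    · exact (pc_slice2 (sm_pc (sm_pd2 hf)) x).intervalIntegrable 0 1
  rw [h]
  have : f x 1 = f x 0 := by simpa using (hp x 0).2
  rw [this, sub_self]

lemma iint_add {A B : ℝ → ℝ → ℂ} (hA : PC A) (hB : PC B) :
    (∫ x in (0:ℝ)..1, ∫ y in (0:ℝ)..1, (A x y + B x y))
      = (∫ x in (0:ℝ)..1, ∫ y in (0:ℝ)..1, A x y)
        + ∫ x in (0:ℝ)..1, ∫ y in (0:ℝ)..1, B x y := by
  have inner : ∀ x : ℝ, (∫ y in (0:ℝ)..1, (A x y + B x y))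
      = (∫ y in (0:ℝ)..1, A x y) + ∫ y in (0:ℝ)..1, B x y := fun x =>
    intervalIntegral.integral_add ((pc_slice2 hA x).intervalIntegrable 0 1)
      ((pc_slice2 hB x).intervalIntegrable 0 1)
  rw [intervalIntegral.integral_congr (g := fun x =>
      (∫ y in (0:ℝ)..1, A x y) + ∫ y in (0:ℝ)..1, B x y) (fun x _ => inner x)]
  exact intervalIntegral.integral_add
    (((intervalIntegral.continuous_parametric_intervalIntegral_of_continuous' (μ := volume)
        (f := A) hA 0 1)).intervalIntegrable 0 1)
    (((intervalIntegral.continuous_parametric_intervalIntegral_of_continuous' (μ := volume)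
        (f := B) hB 0 1)).intervalIntegrable 0 1)

lemma iint_sub {A B : ℝ → ℝ → ℂ} (hA : PC A) (hB : PC B) :
    (∫ x in (0:ℝ)..1, ∫ y in (0:ℝ)..1, (A x y - B x y))
      = (∫ x in (0:ℝ)..1, ∫ y in (0:ℝ)..1, A x y)
        - ∫ x in (0:ℝ)..1, ∫ y in (0:ℝ)..1, B x y := by
  have inner : ∀ x : ℝ, (∫ y in (0:ℝ)..1, (A x y - B x y))
      = (∫ y in (0:ℝ)..1, A x y) - ∫ y in (0:ℝ)..1, B x y := fun x =>
    intervalIntegral.integral_sub ((pc_slice2 hA x).intervalIntegrable 0 1)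
      ((pc_slice2 hB x).intervalIntegrable 0 1)
  rw [intervalIntegral.integral_congr (g := fun x =>
      (∫ y in (0:ℝ)..1, A x y) - ∫ y in (0:ℝ)..1, B x y) (fun x _ => inner x)]
  exact intervalIntegral.integral_sub
    (((intervalIntegral.continuous_parametric_intervalIntegral_of_continuous' (μ := volume)
        (f := A) hA 0 1)).intervalIntegrable 0 1)
    (((intervalIntegral.continuous_parametric_intervalIntegral_of_continuous' (μ := volume)
        (f := B) hB 0 1)).intervalIntegrable 0 1)

lemma iint_swap {A : ℝ → ℝ → ℂ} (hA : PC A) :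
    (∫ x in (0:ℝ)..1, ∫ y in (0:ℝ)..1, A x y)
      = ∫ y in (0:ℝ)..1, ∫ x in (0:ℝ)..1, A x y := by
  have hint : Integrable (Function.uncurry A)
      ((volume.restrict (Set.Ioc (0:ℝ) 1)).prod (volume.restrict (Set.Ioc (0:ℝ) 1))) := by
    rw [Measure.prod_restrict]
    have : IntegrableOn (Function.uncurry A)
        (Set.Icc (0:ℝ) 1 ×ˢ Set.Icc (0:ℝ) 1) ((volume : Measure ℝ).prod volume) := by
      apply hA.continuousOn.integrableOn_compact (isCompact_Icc.prod isCompact_Icc)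
    exact this.mono_set (Set.prod_mono Set.Ioc_subset_Icc_self Set.Ioc_subset_Icc_self)
  have h := MeasureTheory.integral_integral_swap (μ := volume.restrict (Set.Ioc (0:ℝ) 1))
    (ν := volume.restrict (Set.Ioc (0:ℝ) 1)) (f := A) hint
  simp only [intervalIntegral.integral_of_le (zero_le_one (α := ℝ))]
  exact h

lemma sm_mul {f g : ℝ → ℝ → ℂ} (hf : Sm f) (hg : Sm g) : Sm (f * g) := ContDiff.mul hf hg

lemma pc_phi_integrand {f g h : ℝ → ℝ → ℂ} (hf : Sm f) (hg : Sm g) (hh : Sm h) :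
    PC (fun x y => f x y * (pd1 g x y * pd2 h x y - pd2 g x y * pd1 h x y)) :=
  (sm_pc hf).mul (((sm_pc (sm_pd1 hg)).mul (sm_pc (sm_pd2 hh))).sub
    ((sm_pc (sm_pd2 hg)).mul (sm_pc (sm_pd1 hh))))

/-- Stokes on the torus: `∫∫ (∂₁F ∂₂G − ∂₂F ∂₁G) = 0` for periodic smooth `F, G`. -/
lemma key {F G : ℝ → ℝ → ℂ} (hF : Sm F) (hG : Sm G) (pF : Per F) (pG : Per G) :
    (∫ x in (0:ℝ)..1, ∫ y in (0:ℝ)..1,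
      (pd1 F x y * pd2 G x y - pd2 F x y * pd1 G x y)) = 0 := by
  set H₁ : ℝ → ℝ → ℂ := F * pd2 G with hH₁
  set H₂ : ℝ → ℝ → ℂ := F * pd1 G with hH₂
  have smH₁ : Sm H₁ := sm_mul hF (sm_pd2 hG)
  have smH₂ : Sm H₂ := sm_mul hF (sm_pd1 hG)
  have perH₁ : Per H₁ := per_mul pF (per_pd2 pG)
  have perH₂ : Per H₂ := per_mul pF (per_pd1 pG)
  have ptw : ∀ x y : ℝ, pd1 F x y * pd2 G x y - pd2 F x y * pd1 G x y
      = pd1 H₁ x y - pd2 H₂ x y := by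
    intro x y
    rw [hH₁, hH₂, pd1_mul hF (sm_pd2 hG), pd2_mul hF (sm_pd1 hG), clairaut hG]
    ring
  have e1 : (∫ x in (0:ℝ)..1, ∫ y in (0:ℝ)..1,
      (pd1 F x y * pd2 G x y - pd2 F x y * pd1 G x y))
      = ∫ x in (0:ℝ)..1, ∫ y in (0:ℝ)..1, (pd1 H₁ x y - pd2 H₂ x y) := by
    apply intervalIntegral.integral_congr; intro x _
    apply intervalIntegral.integral_congr; intro y _
    exact ptw x y
  rw [e1, iint_sub (sm_pc (sm_pd1 smH₁)) (sm_pc (sm_pd2 smH₂))]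
  have z2 : (∫ x in (0:ℝ)..1, ∫ y in (0:ℝ)..1, pd2 H₂ x y) = 0 := by
    rw [intervalIntegral.integral_congr (g := fun _ => (0:ℂ))
      (fun x _ => integral_pd2_zero smH₂ perH₂ x)]
    simp
  have z1 : (∫ x in (0:ℝ)..1, ∫ y in (0:ℝ)..1, pd1 H₁ x y) = 0 := by
    rw [iint_swap (sm_pc (sm_pd1 smH₁))]
    rw [intervalIntegral.integral_congr (g := fun _ => (0:ℂ))
      (fun y _ => integral_pd1_zero smH₁ perH₁ y)]
    simp
  rw [z1, z2, sub_zero]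

lemma torPhi_antisym (f g h : ℝ → ℝ → ℂ) : torPhi f g h = - torPhi f h g := by
  unfold torPhi
  rw [← intervalIntegral.integral_neg]
  apply intervalIntegral.integral_congr; intro x _
  dsimp only
  rw [← intervalIntegral.integral_neg]
  apply intervalIntegral.integral_congr; intro y _
  dsimp only
  ring

lemma torPhi_comm_first (a b c d : ℝ → ℝ → ℂ) : torPhi (a * b) c d = torPhi (b * a) c d := by
  unfold torPhi
  apply intervalIntegral.integral_congr; intro x _
  apply intervalIntegral.integral_congr; intro y _
  dsimp only
  simp only [Pi.mul_apply]; ring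

lemma torPhi_exp_mid {a b c d : ℝ → ℝ → ℂ} (ha : Sm a) (hb : Sm b) (hc : Sm c) (hd : Sm d) :
    torPhi a (b * c) d = torPhi (a * b) c d + torPhi (a * c) b d := by
  unfold torPhi
  rw [← iint_add (pc_phi_integrand (sm_mul ha hb) hc hd) (pc_phi_integrand (sm_mul ha hc) hb hd)]
  apply intervalIntegral.integral_congr; intro x _
  apply intervalIntegral.integral_congr; intro y _
  dsimp only
  rw [pd1_mul hb hc, pd2_mul hb hc]
  simp only [Pi.mul_apply]
  ring

lemma torPhi_exp_last {a b c d : ℝ → ℝ → ℂ} (ha : Sm a) (hb : Sm b) (hc : Sm c) (hd : Sm d) :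
    torPhi a b (c * d) = torPhi (a * d) b c + torPhi (a * c) b d := by
  unfold torPhi
  rw [← iint_add (pc_phi_integrand (sm_mul ha hd) hb hc) (pc_phi_integrand (sm_mul ha hc) hb hd)]
  apply intervalIntegral.integral_congr; intro x _
  apply intervalIntegral.integral_congr; intro y _
  dsimp only
  rw [pd1_mul hc hd, pd2_mul hc hd]
  simp only [Pi.mul_apply]
  ring

lemma torPhi_cyclic_aux {a b c : ℝ → ℝ → ℂ} (ha : Sm a) (hb : Sm b) (hc : Sm c)
    (pa : Per a) (pb : Per b) (pc : Per c) :
    torPhi a c b + torPhi c a b = 0 := by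
  have h := key (sm_mul ha hc) hb (per_mul pa pc) pb
  rw [← h]
  unfold torPhi
  rw [← iint_add (pc_phi_integrand ha hc hb) (pc_phi_integrand hc ha hb)]
  apply intervalIntegral.integral_congr; intro x _
  apply intervalIntegral.integral_congr; intro y _
  dsimp only
  rw [pd1_mul ha hc, pd2_mul ha hc]
  ring

/-- `φ(f₀,f₁,f₂) = ∫_{[0,1]²} f₀(∂₁f₁ ∂₂f₂ − ∂₂f₁ ∂₁f₂)` is a cyclic 2-cocycle
on the algebra of smooth `ℤ²`-periodic functions: `bφ = 0` and `λφ = φ`. -/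
theorem torus_fundamental_class_is_cyclic_two_cocycle
    (f₀ f₁ f₂ f₃ : ℝ → ℝ → ℂ)
    (hs₀ : ContDiff ℝ (⊤ : ℕ∞) (fun p : ℝ × ℝ => f₀ p.1 p.2))
    (hs₁ : ContDiff ℝ (⊤ : ℕ∞) (fun p : ℝ × ℝ => f₁ p.1 p.2))
    (hs₂ : ContDiff ℝ (⊤ : ℕ∞) (fun p : ℝ × ℝ => f₂ p.1 p.2))
    (hs₃ : ContDiff ℝ (⊤ : ℕ∞) (fun p : ℝ × ℝ => f₃ p.1 p.2))
    (hp₀ : ∀ x y : ℝ, f₀ (x + 1) y = f₀ x y ∧ f₀ x (y + 1) = f₀ x y)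
    (hp₁ : ∀ x y : ℝ, f₁ (x + 1) y = f₁ x y ∧ f₁ x (y + 1) = f₁ x y)
    (hp₂ : ∀ x y : ℝ, f₂ (x + 1) y = f₂ x y ∧ f₂ x (y + 1) = f₂ x y)
    (hp₃ : ∀ x y : ℝ, f₃ (x + 1) y = f₃ x y ∧ f₃ x (y + 1) = f₃ x y) :
    torPhi (f₀ * f₁) f₂ f₃ - torPhi f₀ (f₁ * f₂) f₃ + torPhi f₀ f₁ (f₂ * f₃)
        - torPhi (f₃ * f₀) f₁ f₂ = 0 ∧
    torPhi f₂ f₀ f₁ = torPhi f₀ f₁ f₂ := by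
  constructor
  · rw [torPhi_exp_mid hs₀ hs₁ hs₂ hs₃, torPhi_exp_last hs₀ hs₁ hs₂ hs₃,
      torPhi_comm_first f₃ f₀ f₁ f₂]
    ring
  · have h1 : torPhi f₀ f₂ f₁ + torPhi f₂ f₀ f₁ = 0 :=
      torPhi_cyclic_aux hs₀ hs₁ hs₂ hp₀ hp₁ hp₂
    have h2 : torPhi f₀ f₁ f₂ = - torPhi f₀ f₂ f₁ := torPhi_antisym f₀ f₁ f₂
    rw [h2]
    linear_combination h1

end
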